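/- Two Motzkin paths P and Q of the same size n lie in the same connected component of the Hasse diagram of the poset (≤_M, M_n) if and only if cls(P) = cls(Q). In other words, the connected components of (≤_M, M_n) are exactly the sets of Motzkin paths of size n having a fixed class. -/

import Mathlib

/-- Steps: north `N = (0,1)`, east `E = (1,0)`, diagonal `D = (1,1)`. -/
inductive MStep : Type
  | N | E | D
  deriving DecidableEq

/-- The contribution of a step to the height `y - x` above the diagonal. -/
def MStep.hdiff : MStep → ℤ
  | .N => 1
  | .E => -1
  | .D => 0

/-- The total height change `y - x` along a word of steps. -/
def wsum (p : List MStep) : ℤ := (p.map MStep.hdiff).sum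

/-- A (nonempty) Motzkin path: starts at the origin, never goes below the
diagonal `y = x`, and ends on the diagonal. -/
def IsMotzkin (p : List MStep) : Prop :=
  p ≠ [] ∧ (∀ q, q <+: p → 0 ≤ wsum q) ∧ wsum p = 0

/-- A Dyck path is a Motzkin path with no diagonal step. -/
def IsDyck (p : List MStep) : Prop := IsMotzkin p ∧ MStep.D ∉ p

/-- A path is primitive if it touches the diagonal only at its endpoints. -/
def IsPrimitive (p : List MStep) : Prop :=
  IsMotzkin p ∧ ∀ q, q <+: p → q ≠ [] → q ≠ p → 0 < wsum q

/-- Covering relation for the Tamari-type order on Motzkin paths: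
`Q` covers `P` iff `P = P₁·E·P₂·P₃` and `Q = P₁·P₂·E·P₃` with `P₂` a nonempty
primitive Motzkin path. -/
def MCover (P Q : List MStep) : Prop :=
  ∃ P₁ P₂ P₃ : List MStep, IsMotzkin P₂ ∧ IsPrimitive P₂ ∧
    P = P₁ ++ [MStep.E] ++ P₂ ++ P₃ ∧ Q = P₁ ++ P₂ ++ [MStep.E] ++ P₃

/-- Covering relation of the Tamari order on Dyck paths. -/
def DCover (P Q : List MStep) : Prop :=
  ∃ P₁ P₂ P₃ : List MStep, IsDyck P₂ ∧ IsPrimitive P₂ ∧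
    P = P₁ ++ [MStep.E] ++ P₂ ++ P₃ ∧ Q = P₁ ++ P₂ ++ [MStep.E] ++ P₃

/-- The partial order `≤_M` on Motzkin paths. -/
def MLE : List MStep → List MStep → Prop := Relation.ReflTransGen MCover

/-- The Tamari order `≤_D` on Dyck paths. -/
def DLE : List MStep → List MStep → Prop := Relation.ReflTransGen DCover

/-- Heights of the diagonal steps along a path, starting from height `h`. -/
def clsFrom : List MStep → ℤ → List ℤ
  | [], _ => []
  | .N :: rest, h => clsFrom rest (h + 1)
  | .E :: rest, h => clsFrom rest h
  | .D :: rest, h => (h + 1) :: clsFrom rest (h + 1)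

/-- The class of a Motzkin path: the sequence of heights (ending `y`-coordinates)
of its diagonal steps, in the order they occur. -/
def cls (p : List MStep) : List ℤ := clsFrom p 0

/-- A path avoids `NNN` if it has no three consecutive north steps. -/
def AvoidsNNN (p : List MStep) : Prop := ¬ ([MStep.N, MStep.N, MStep.N] <:+: p)

/-- Callan's bijection `φ`: replace each factor `NE` by `D` and each factor
`NNE` by `N`, leaving remaining east steps unchanged. -/
def phi : List MStep → List MStep
  | [] => []
  | .N :: .N :: .E :: rest => .N :: phi rest
  | .N :: .E :: rest => .D :: phi rest
  | s :: rest => s :: phi rest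

/-- The inverse of `φ`: replace each `D` by `NE` and each `N` by `NNE`. -/
def psi : List MStep → List MStep
  | [] => []
  | .N :: rest => .N :: .N :: .E :: psi rest
  | .D :: rest => .N :: .E :: psi rest
  | .E :: rest => .E :: psi rest

/-- For each north step of the path (in order), record `N` if it is immediately
followed by an east step and `E` otherwise. -/
def typeRaw : List MStep → List MStep
  | [] => []
  | .N :: rest => (if rest.head? = some MStep.E then MStep.N else MStep.E) :: typeRaw rest
  | _ :: rest => typeRaw rest

/-- The type of a Dyck path of length `2n`: the word of length `n - 1` whose
`i`-th letter is `N` iff the `i`-th north step is immediately followed by an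
east step (the letter of the last north step is dropped). -/
def typeW (p : List MStep) : List MStep := (typeRaw p).dropLast

/-- `ds p` is the number of north steps of `p` that are neither immediately
preceded nor immediately followed by another north step. -/
def ds (p : List MStep) : ℕ :=
  ((Finset.range p.length).filter (fun i =>
    p[i]? = some MStep.N ∧ p[i + 1]? ≠ some MStep.N ∧
      (i = 0 ∨ p[i - 1]? ≠ some MStep.N))).card

/-- The number of contacts of a path with the diagonal `y = x` (lattice points
of the path lying on the diagonal, endpoints included). -/
def cont (p : List MStep) : ℕ :=
  ((Finset.range (p.length + 1)).filter (fun i => wsum (p.take i) = 0)).card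


/-! ### Auxiliary lemmas -/

open MStep List Relation

lemma wsum_nil : wsum [] = 0 := rfl

lemma wsum_cons (s : MStep) (p : List MStep) : wsum (s :: p) = s.hdiff + wsum p := by
  simp [wsum]

lemma wsum_append (a b : List MStep) : wsum (a ++ b) = wsum a + wsum b := by
  simp [wsum]

/-- The y-coordinate increase along a word. -/
def ysum (p : List MStep) : ℤ :=
  (p.map fun s => match s with | .E => (0 : ℤ) | _ => 1).sum

lemma ysum_append (a b : List MStep) : ysum (a ++ b) = ysum a + ysum b := by
  simp [ysum]

lemma clsFrom_append (a b : List MStep) (h : ℤ) :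
    clsFrom (a ++ b) h = clsFrom a h ++ clsFrom b (h + ysum a) := by
  induction a generalizing h with
  | nil => simp [clsFrom, ysum]
  | cons s r ih =>
    cases s <;> simp [clsFrom, ih, ysum, wsum] at * <;>
      rw [show ∀ x : ℤ, h + 1 + x = h + (1 + x) from fun x => by ring] <;> rfl

lemma cover_cls {P Q : List MStep} (h : MCover P Q) : cls P = cls Q := by
  obtain ⟨P₁, P₂, P₃, _, _, hP, hQ⟩ := h
  subst hP hQ
  simp only [cls, clsFrom_append, ysum_append]
  have h0 : ∀ h : ℤ, clsFrom [MStep.E] h = [] := fun _ => rfl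
  have h1 : ysum [MStep.E] = 0 := rfl
  simp [h0, h1]

lemma wsum_count (p : List MStep) :
    wsum p = (p.count MStep.N : ℤ) - (p.count MStep.E : ℤ) := by
  induction p with
  | nil => simp [wsum]
  | cons s r ih =>
    cases s <;> simp [wsum_cons, ih, List.count_cons, MStep.hdiff] <;> push_cast <;> ring

lemma count_sum_length (p : List MStep) :
    p.count MStep.N + p.count MStep.E + p.count MStep.D = p.length := by
  induction p with
  | nil => simp
  | cons s r ih => cases s <;> simp [List.count_cons, ← ih] <;> omega

lemma prefix_append_cases {q a b : List MStep} (h : q <+: a ++ b) :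
    q <+: a ∨ ∃ r, r <+: b ∧ q = a ++ r := by
  obtain ⟨t, ht⟩ := h
  rcases List.append_eq_append_iff.mp ht with ⟨a', ha', _⟩ | ⟨c', hc', hc₂⟩
  · exact Or.inl ⟨a', ha'.symm⟩
  · exact Or.inr ⟨c', ⟨t, hc₂.symm⟩, hc'⟩

lemma mcover_length {P Q : List MStep} (h : MCover P Q) : P.length = Q.length := by
  obtain ⟨P₁, P₂, P₃, _, _, hP, hQ⟩ := h
  subst hP hQ; simp; omega

lemma motzkin_mid_pos {P₁ P₂ : List MStep}
    (h : ∀ q, q <+: P₁ ++ [MStep.E] ++ P₂ → 0 ≤ wsum q) : 1 ≤ wsum P₁ := by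
  have := h (P₁ ++ [MStep.E]) ⟨P₂, by simp⟩
  rw [wsum_append] at this
  have he : wsum [MStep.E] = -1 := rfl
  omega

lemma mcover_motzkin {P Q : List MStep} (h : MCover P Q) (hP : IsMotzkin P) :
    IsMotzkin Q := by
  obtain ⟨P₁, P₂, P₃, hM₂, _, hPe, hQe⟩ := h
  obtain ⟨hne, hpre, htot⟩ := hP
  subst hPe hQe
  have hE : wsum [MStep.E] = -1 := rfl
  have h1 : 1 ≤ wsum P₁ := by
    apply motzkin_mid_pos (P₂ := P₂ ++ P₃)
    intro q hq; exact hpre q (by simpa [List.append_assoc] using hq)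
  refine ⟨by simp, ?_, ?_⟩
  · intro q hq
    rcases prefix_append_cases (a := P₁ ++ P₂ ++ [MStep.E]) (b := P₃)
        (by simpa [List.append_assoc] using hq) with hq1 | ⟨r, hr, rfl⟩
    · rcases prefix_append_cases (a := P₁ ++ P₂) (b := [MStep.E]) hq1 with hq2 | ⟨r, hr, rfl⟩
      · rcases prefix_append_cases hq2 with hq3 | ⟨r, hr, rfl⟩
        · exact hpre _ (hq3.trans ⟨[MStep.E] ++ P₂ ++ P₃, by simp⟩)
        · have := hM₂.2.1 r hr
          rw [wsum_append]; omega
      · have hrr : r = [] ∨ r = [MStep.E] := by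
          cases r with
          | nil => exact Or.inl rfl
          | cons x xs =>
            obtain ⟨t, ht⟩ := hr
            simp at ht
            exact Or.inr (by rw [ht.1, ht.2.1])
        have h2 := hM₂.2.2
        rcases hrr with rfl | rfl <;> rw [wsum_append, wsum_append] <;>
          simp [hE, h2, wsum_nil] <;> omega
    · have hpr := hpre (P₁ ++ [MStep.E] ++ P₂ ++ r)
        (by
          have : P₁ ++ [MStep.E] ++ P₂ ++ r <+: P₁ ++ [MStep.E] ++ P₂ ++ P₃ := by
            simpa [List.append_assoc] using
              (List.prefix_append_right_inj (P₁ ++ [MStep.E] ++ P₂)).mpr hr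
          exact this)
      simp only [wsum_append] at hpr ⊢
      omega
  · simp only [wsum_append] at htot ⊢
    omega

/-- Sum over east steps of the distance to the end of the word. -/
def meas : List MStep → ℕ
  | [] => 0
  | s :: r => (if s = MStep.E then r.length + 1 else 0) + meas r

lemma meas_append (a b : List MStep) :
    meas (a ++ b) = meas a + a.count MStep.E * b.length + meas b := by
  induction a with
  | nil => simp [meas]
  | cons s r ih =>
    by_cases hs : s = MStep.E <;>
      simp [meas, hs, ih, List.count_cons, List.length_append] <;> ring

lemma countE_lt_length {p : List MStep} (hM : IsMotzkin p) :
    p.count MStep.E < p.length := by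
  have h1 := wsum_count p
  have h2 := count_sum_length p
  have h3 := hM.2.2
  have h4 : p.length ≠ 0 := fun h => hM.1 (List.length_eq_zero_iff.mp h)
  omega

lemma mcover_meas {P Q : List MStep} (h : MCover P Q) : meas Q < meas P := by
  obtain ⟨P₁, P₂, P₃, hM₂, _, hPe, hQe⟩ := h
  have hce := countE_lt_length hM₂
  subst hPe hQe
  have hE : meas [MStep.E] = 1 := rfl
  have hcE : List.count MStep.E [MStep.E] = 1 := rfl
  simp only [meas_append, List.count_append, List.length_append, hE, hcE,
    List.length_singleton]
  set a := meas P₁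
  set b := meas P₂
  set d := meas P₃
  set c1 := P₁.count MStep.E
  set c2 := P₂.count MStep.E
  set L2 := P₂.length
  set L3 := P₃.length
  ring_nf
  nlinarith

lemma hdiff_ge (s : MStep) : -1 ≤ s.hdiff := by cases s <;> simp [MStep.hdiff]

lemma wsum_take_succ (p : List MStep) (i : ℕ) (hi : i < p.length) :
    wsum (p.take (i + 1)) = wsum (p.take i) + (p.get ⟨i, hi⟩).hdiff := by
  rw [List.take_succ, wsum_append]
  simp [List.getElem?_eq_getElem hi, wsum]

lemma exists_cover_of_move {A B : List MStep} {s : MStep}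
    (hP : IsMotzkin (A ++ MStep.E :: s :: B)) (hs : s ≠ MStep.E) :
    ∃ Q, MCover (A ++ MStep.E :: s :: B) Q := by
  classical
  set C := s :: B with hC
  have hdecomp : A ++ MStep.E :: s :: B = A ++ [MStep.E] ++ C := by simp [hC]
  have hE : wsum [MStep.E] = -1 := rfl
  have hA1 : 1 ≤ wsum A := by
    apply motzkin_mid_pos (P₂ := C)
    intro q hq
    exact hP.2.1 q (by rwa [hdecomp])
  have htot : wsum A + wsum [MStep.E] + wsum C = 0 := by
    have h0 := hP.2.2
    rw [hdecomp, wsum_append, wsum_append] at h0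
    exact h0
  have hCle : wsum C ≤ 0 := by omega
  have hex : ∃ j, 1 ≤ j ∧ wsum (C.take j) ≤ 0 :=
    ⟨C.length, by simp [hC], by simpa using hCle⟩
  obtain ⟨j, hj1, hjle, hjlen, hmin⟩ :
      ∃ j, 1 ≤ j ∧ wsum (C.take j) ≤ 0 ∧ j ≤ C.length ∧
        ∀ m, 1 ≤ m → m < j → 0 < wsum (C.take m) := by
    refine ⟨Nat.find hex, (Nat.find_spec hex).1, (Nat.find_spec hex).2,
      Nat.find_min' hex ⟨by simp [hC], by simpa using hCle⟩, ?_⟩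
    intro m hm1 hmj
    have hnm := Nat.find_min hex hmj
    push_neg at hnm
    exact hnm hm1
  have hzero : wsum (C.take j) = 0 := by
    rcases Nat.lt_or_ge j 2 with h2 | h2
    · have : j = 1 := by omega
      subst this
      have ht1 : C.take 1 = [s] := by simp [hC]
      rw [ht1] at hjle ⊢
      cases s with
      | N => norm_num [wsum, MStep.hdiff] at hjle
      | E => exact absurd rfl hs
      | D => norm_num [wsum, MStep.hdiff]
    · have hi : j - 1 < C.length := by omega
      have heq := wsum_take_succ C (j - 1) hi
      rw [show j - 1 + 1 = j by omega] at heq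
      have hpos := hmin (j - 1) (by omega) (by omega)
      have hge := hdiff_ge (C.get ⟨j - 1, hi⟩)
      omega
  set P₂ := C.take j with hP₂
  set P₃ := C.drop j with hP₃
  have hlenP₂ : P₂.length = j := by simp [hP₂]; omega
  have hqlt : ∀ q, q <+: P₂ → q ≠ [] → q ≠ P₂ → 0 < wsum q := by
    intro q hq hne hne'
    have hql : q.length ≤ j := by
      have := hq.length_le; omega
    have hqe : q = C.take q.length :=
      List.prefix_iff_eq_take.mp (hq.trans (List.take_prefix _ _))
    have hqj : q.length ≠ j := by
      intro hcon
      exact hne' (hq.eq_of_length (by rw [hlenP₂, hcon]))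
    have hq1 : 1 ≤ q.length := by
      cases q with
      | nil => exact absurd rfl hne
      | cons _ _ => simp
    rw [hqe]
    exact hmin _ hq1 (by omega)
  have hM₂ : IsMotzkin P₂ := by
    refine ⟨?_, ?_, hzero⟩
    · intro hcon
      have := congrArg List.length hcon
      rw [hlenP₂] at this
      simp at this
      omega
    · intro q hq
      by_cases h0 : q = []
      · simp [h0, wsum]
      by_cases hp : q = P₂
      · rw [hp, hzero]
      · exact le_of_lt (hqlt q hq h0 hp)
  refine ⟨A ++ P₂ ++ [MStep.E] ++ P₃, A, P₂, P₃, hM₂, ⟨hM₂, hqlt⟩, ?_, rfl⟩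
  rw [hdecomp]
  simp [hP₂, hP₃, List.append_assoc]

/-- A path whose east steps all come at the end. -/
def Terminal (p : List MStep) : Prop :=
  ∃ w m, p = w ++ List.replicate m MStep.E ∧ MStep.E ∉ w

lemma terminal_of_no_move {p : List MStep}
    (h : ∀ A s B, p = A ++ MStep.E :: s :: B → s = MStep.E) : Terminal p := by
  induction p with
  | nil => exact ⟨[], 0, by simp, by simp⟩
  | cons x r ih =>
    obtain ⟨w, m, hwm, hEw⟩ := ih (fun A s B hr => h (x :: A) s B (by simp [hr]))
    by_cases hx : x = MStep.E
    · subst hx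
      have hw : w = [] := by
        cases w with
        | nil => rfl
        | cons y ys =>
          have hy : y ≠ MStep.E := fun hy => hEw (by simp [hy])
          exact absurd (h [] y (ys ++ List.replicate m MStep.E) (by rw [hwm]; rfl)) hy
      subst hw
      exact ⟨[], m + 1, by simp [hwm, List.replicate_succ], by simp⟩
    · refine ⟨x :: w, m, by simp [hwm], ?_⟩
      simp [hEw]
      exact fun hc => hx hc.symm

lemma exists_move_of_not_terminal {p : List MStep} (h : ¬ Terminal p) :
    ∃ A s B, p = A ++ MStep.E :: s :: B ∧ s ≠ MStep.E := by
  by_contra hcon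
  push_neg at hcon
  exact h (terminal_of_no_move fun A s B hp => hcon A s B hp)

lemma exists_terminal (P : List MStep) (hM : IsMotzkin P) :
    ∃ T, Relation.ReflTransGen MCover P T ∧ IsMotzkin T ∧ Terminal T := by
  by_cases ht : Terminal P
  · exact ⟨P, Relation.ReflTransGen.refl, hM, ht⟩
  · obtain ⟨A, s, B, hPe, hs⟩ := exists_move_of_not_terminal ht
    obtain ⟨Q, hQ⟩ := exists_cover_of_move (hPe ▸ hM) hs
    rw [← hPe] at hQ
    have hmQ : meas Q < meas P := mcover_meas hQ
    obtain ⟨T, hc, hMT, hTt⟩ := exists_terminal Q (mcover_motzkin hQ hM)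
    exact ⟨T, Relation.ReflTransGen.head hQ hc, hMT, hTt⟩
termination_by meas P
decreasing_by simpa using hmQ

lemma clsFrom_gt {p : List MStep} {h : ℤ} : ∀ x ∈ clsFrom p h, h < x := by
  induction p generalizing h with
  | nil => simp [clsFrom]
  | cons s r ih =>
    cases s with
    | N => exact fun x hx => lt_trans (by omega) (ih x hx)
    | E => exact fun x hx => ih x hx
    | D =>
      intro x hx
      simp [clsFrom] at hx
      rcases hx with rfl | hx
      · omega
      · exact lt_trans (by omega) (ih x hx)

lemma clsFrom_length (p : List MStep) (h : ℤ) :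
    (clsFrom p h).length = p.count MStep.D := by
  induction p generalizing h with
  | nil => simp [clsFrom]
  | cons s r ih => cases s <;> simp [clsFrom, ih, List.count_cons]

lemma ndword_unique : ∀ (w₁ w₂ : List MStep) (h : ℤ),
    MStep.E ∉ w₁ → MStep.E ∉ w₂ → w₁.length = w₂.length →
    clsFrom w₁ h = clsFrom w₂ h → w₁ = w₂ := by
  intro w₁
  induction w₁ with
  | nil =>
    intro w₂ h _ _ hl _
    exact (List.length_eq_zero_iff.mp hl.symm).symm ▸ rfl
  | cons s r ih =>
    intro w₂ h hE1 hE2 hl hc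
    cases w₂ with
    | nil => simp at hl
    | cons t r₂ =>
      have hsE : s ≠ MStep.E := fun hx => hE1 (by simp [hx])
      have htE : t ≠ MStep.E := fun hx => hE2 (by simp [hx])
      have key : s = t := by
        cases s <;> cases t <;> first
          | rfl
          | exact absurd rfl hsE
          | exact absurd rfl htE
          | · exfalso
              simp [clsFrom] at hc
              first
                | exact absurd (clsFrom_gt _ (hc ▸ List.mem_cons_self)) (by omega)
                | exact absurd (clsFrom_gt _ (hc.symm ▸ List.mem_cons_self)) (by omega)
      subst key
      have hr : r = r₂ := by
        apply ih r₂ (if s = MStep.D then h + 1 else h + 1)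
        · exact fun hx => hE1 (by simp [hx])
        · exact fun hx => hE2 (by simp [hx])
        · simpa using hl
        · cases s with
          | N => simpa [clsFrom] using hc
          | E => exact absurd rfl hsE
          | D => simpa [clsFrom] using hc
      rw [hr]

lemma clsFrom_replicate_E (m : ℕ) (h : ℤ) :
    clsFrom (List.replicate m MStep.E) h = [] := by
  induction m generalizing h with
  | zero => rfl
  | succ k ih => simp [List.replicate_succ, clsFrom, ih]

lemma wsum_replicate_E (m : ℕ) : wsum (List.replicate m MStep.E) = -(m : ℤ) := by
  induction m with
  | zero => rfl
  | succ k ih =>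
    rw [List.replicate_succ, wsum_cons, ih]
    simp [MStep.hdiff]

lemma terminal_unique {P Q : List MStep} (hMP : IsMotzkin P) (hMQ : IsMotzkin Q)
    (hTP : Terminal P) (hTQ : Terminal Q) (hl : P.length = Q.length)
    (hc : cls P = cls Q) : P = Q := by
  obtain ⟨w₁, m₁, rfl, hE1⟩ := hTP
  obtain ⟨w₂, m₂, rfl, hE2⟩ := hTQ
  have hcw : clsFrom w₁ 0 = clsFrom w₂ 0 := by
    have := hc
    simpa [cls, clsFrom_append, clsFrom_replicate_E] using this
  have hcnt1 : w₁.count MStep.E = 0 := List.count_eq_zero.mpr hE1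
  have hcnt2 : w₂.count MStep.E = 0 := List.count_eq_zero.mpr hE2
  have hw1 : wsum w₁ = (w₁.count MStep.N : ℤ) := by rw [wsum_count, hcnt1]; simp
  have hw2 : wsum w₂ = (w₂.count MStep.N : ℤ) := by rw [wsum_count, hcnt2]; simp
  have ht1 : wsum w₁ + wsum (List.replicate m₁ MStep.E) = 0 := by
    rw [← wsum_append]; exact hMP.2.2
  have ht2 : wsum w₂ + wsum (List.replicate m₂ MStep.E) = 0 := by
    rw [← wsum_append]; exact hMQ.2.2
  rw [wsum_replicate_E] at ht1 ht2
  have hm1 : w₁.count MStep.N = m₁ := by rw [hw1] at ht1; exact_mod_cast by omega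
  have hm2 : w₂.count MStep.N = m₂ := by rw [hw2] at ht2; exact_mod_cast by omega
  have hD : w₁.count MStep.D = w₂.count MStep.D := by
    rw [← clsFrom_length w₁ 0, ← clsFrom_length w₂ 0, hcw]
  have hl1 := count_sum_length w₁
  have hl2 := count_sum_length w₂
  simp only [List.length_append, List.length_replicate] at hl
  have hlen : w₁.length = w₂.length := by omega
  have hw : w₁ = w₂ := ndword_unique w₁ w₂ 0 hE1 hE2 hlen hcw
  have hm : m₁ = m₂ := by omega
  rw [hw, hm]

lemma rtg_cls {P Q : List MStep} (h : Relation.ReflTransGen MCover P Q) :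
    cls P = cls Q := by
  induction h with
  | refl => rfl
  | tail _ hc ih => exact ih.trans (cover_cls hc)

lemma rtg_length {P Q : List MStep} (h : Relation.ReflTransGen MCover P Q) :
    P.length = Q.length := by
  induction h with
  | refl => rfl
  | tail _ hc ih => exact ih.trans (mcover_length hc)

lemma rtg_motzkin {P Q : List MStep} (h : Relation.ReflTransGen MCover P Q)
    (hM : IsMotzkin P) : IsMotzkin Q := by
  induction h with
  | refl => exact hM
  | tail _ hc ih => exact mcover_motzkin hc ih

lemma lift_chain {n : ℕ} {a b : List MStep} (h : Relation.ReflTransGen MCover a b)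
    (ha : IsMotzkin a) (hla : a.length = n) :
    ∀ (hb : IsMotzkin b ∧ b.length = n),
      Relation.EqvGen
        (fun x y : {p : List MStep // IsMotzkin p ∧ p.length = n} => MCover x.1 y.1)
        ⟨a, ⟨ha, hla⟩⟩ ⟨b, hb⟩ := by
  induction h with
  | refl => intro hb; exact Relation.EqvGen.refl _
  | @tail b' c hab' hc ih =>
    intro hbc
    have hb' : IsMotzkin b' ∧ b'.length = n :=
      ⟨rtg_motzkin hab' ha, (rtg_length hab').symm.trans hla⟩
    exact Relation.EqvGen.trans _ _ _ (ih hb')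
      (Relation.EqvGen.rel (⟨b', hb'⟩ : {p : List MStep // IsMotzkin p ∧ p.length = n})
        ⟨c, hbc⟩ hc)

/-- Two Motzkin paths of size `n` are in the same connected
component of the Hasse diagram of `(≤_M, M_n)` (i.e. joined by the equivalence
relation generated by the covering relation) iff they have the same class. -/
theorem same_component_iff_cls_eq (n : ℕ)
    (P Q : {p : List MStep // IsMotzkin p ∧ p.length = n}) :
    Relation.EqvGen
        (fun a b : {p : List MStep // IsMotzkin p ∧ p.length = n} => MCover a.1 b.1) P Q
      ↔ cls P.1 = cls Q.1 := by
  constructor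
  · intro h
    induction h with
    | rel a b hab => exact cover_cls hab
    | refl a => rfl
    | symm a b _ ih => exact ih.symm
    | trans a b c _ _ ih1 ih2 => exact ih1.trans ih2
  · intro hcls
    obtain ⟨p, hMp, hlp⟩ := P
    obtain ⟨q, hMq, hlq⟩ := Q
    simp only at hcls
    obtain ⟨Tp, hcp, hMTp, hTtp⟩ := exists_terminal p hMp
    obtain ⟨Tq, hcq, hMTq, hTtq⟩ := exists_terminal q hMq
    have hTeq : Tp = Tq := by
      apply terminal_unique hMTp hMTq hTtp hTtq
      · rw [← rtg_length hcp, ← rtg_length hcq, hlp, hlq]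
      · rw [← rtg_cls hcp, ← rtg_cls hcq, hcls]
    have hTp : IsMotzkin Tp ∧ Tp.length = n :=
      ⟨hMTp, (rtg_length hcp).symm.trans hlp⟩
    have hTq : IsMotzkin Tq ∧ Tq.length = n :=
      ⟨hMTq, (rtg_length hcq).symm.trans hlq⟩
    have e1 := lift_chain (n := n) hcp hMp hlp hTp
    have e2 := lift_chain (n := n) hcq hMq hlq hTq
    have : (⟨Tp, hTp⟩ : {p : List MStep // IsMotzkin p ∧ p.length = n}) = ⟨Tq, hTq⟩ :=
      Subtype.ext hTeq
    rw [this] at e1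
    exact Relation.EqvGen.trans _ _ _ e1 (Relation.EqvGen.symm _ _ e2)
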